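/- arXiv:2303.11795 — 2 statements merged into one kernel-verified Lean document; each statement's English description precedes it below -/
import Mathlib

section
/- For every unitary operator g on H and all trace-class operators x₃, x on H, one has Π_r(g)(x₃, x) = −Im Tr( x · g p_{u₂}(g⁻¹ p_{b₂⁺}(x₃) g) g⁻¹ ). In other words, the interior product of Π_r(g) with x₃ is represented by the bounded skew-hermitian operator −g p_{u₂}(g⁻¹ p_{b₂⁺}(x₃) g) g⁻¹ via the pairing (a, b) ↦ Im Tr(ab). -/
/- Setting: `H` is a separable complex Hilbert space with a fixed orthonormal
(Hilbert) basis `e` indexed by `ℤ`. -/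

set_option synthInstance.maxHeartbeats 1000000
set_option maxHeartbeats 2000000

noncomputable section
open ContinuousLinearMap

namespace PL

variable {H : Type*} [NormedAddCommGroup H] [InnerProductSpace ℂ H] [CompleteSpace H]

/-- `A` is a bounded skew-hermitian operator: `A* = -A`. -/
def SkewHerm (A : H →L[ℂ] H) : Prop := star A = -A

/-- `A` is Hilbert–Schmidt: `∑ₙ ‖A eₙ‖² < ∞` (computed in the orthonormal basis `e`;
this is equivalent to the basis-free notion). -/
def IsHS (e : HilbertBasis ℤ ℂ H) (A : H →L[ℂ] H) : Prop :=
  Summable (fun n : ℤ => ‖A (e n)‖ ^ 2)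

/-- The Hilbert–Schmidt norm `‖A‖₂`. -/
def hsNorm (e : HilbertBasis ℤ ℂ H) (A : H →L[ℂ] H) : ℝ :=
  Real.sqrt (∑' n : ℤ, ‖A (e n)‖ ^ 2)

/-- The absolute value `|A| = √(A* A)` of a bounded operator, via the continuous
functional calculus. -/
def absCLM (A : H →L[ℂ] H) : H →L[ℂ] H := CFC.sqrt (star A * A)

/-- `A` is trace class: `Tr |A| = ∑ₙ ⟨eₙ, |A| eₙ⟩ < ∞`. -/
def IsTC (e : HilbertBasis ℤ ℂ H) (A : H →L[ℂ] H) : Prop :=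
  Summable (fun n : ℤ => (inner ℂ (e n) (absCLM A (e n)) : ℂ).re)

/-- The trace norm `‖A‖₁ = Tr |A|`. -/
def traceNorm (e : HilbertBasis ℤ ℂ H) (A : H →L[ℂ] H) : ℝ :=
  ∑' n : ℤ, (inner ℂ (e n) (absCLM A (e n)) : ℂ).re

/-- The trace of a (trace-class) operator: `Tr A = ∑ₙ ⟨eₙ, A eₙ⟩`. -/
def traceOp (e : HilbertBasis ℤ ℂ H) (A : H →L[ℂ] H) : ℂ :=
  ∑' n : ℤ, (inner ℂ (e n) (A (e n)) : ℂ)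

/-- `A` is upper triangular: `⟨eₘ, A eₙ⟩ = 0` whenever `m < n`. -/
def UpperTri (e : HilbertBasis ℤ ℂ H) (A : H →L[ℂ] H) : Prop :=
  ∀ m n : ℤ, m < n → (inner ℂ (e m) (A (e n)) : ℂ) = 0

/-- All diagonal entries `⟨eₙ, A eₙ⟩` of `A` are real. -/
def RealDiag (e : HilbertBasis ℤ ℂ H) (A : H →L[ℂ] H) : Prop :=
  ∀ n : ℤ, (inner ℂ (e n) (A (e n)) : ℂ).im = 0

/-- Membership in `b₁⁺(H)`: trace-class, upper triangular, real diagonal. -/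
def InB1 (e : HilbertBasis ℤ ℂ H) (A : H →L[ℂ] H) : Prop :=
  IsTC e A ∧ UpperTri e A ∧ RealDiag e A

/-- Membership in `u₁(H)`: trace-class and skew-hermitian. -/
def InU1 (e : HilbertBasis ℤ ℂ H) (A : H →L[ℂ] H) : Prop :=
  IsTC e A ∧ SkewHerm A

/-- Membership in `b₂⁺(H)`: Hilbert–Schmidt, upper triangular, real diagonal. -/
def InB2 (e : HilbertBasis ℤ ℂ H) (A : H →L[ℂ] H) : Prop :=
  IsHS e A ∧ UpperTri e A ∧ RealDiag e A

/-- Membership in `u₂(H)`: Hilbert–Schmidt and skew-hermitian. -/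
def InU2 (e : HilbertBasis ℤ ℂ H) (A : H →L[ℂ] H) : Prop :=
  IsHS e A ∧ SkewHerm A

/-- Given projection maps `pu`, `pb` realizing `L₂(H) = u₂(H) ⊕ b₂⁺(H)`, and a
unitary `g` (so `g⁻¹ = g*`), the bilinear map
`Π_r(g)(x₁, x₂) = Im Tr((g⁻¹ p_{b₂⁺}(x₁) g) · p_{u₂}(g⁻¹ p_{b₂⁺}(x₂) g))`. -/
def Pir (e : HilbertBasis ℤ ℂ H) (pu pb : (H →L[ℂ] H) → (H →L[ℂ] H))
    (g x₁ x₂ : H →L[ℂ] H) : ℝ :=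
  (traceOp e ((star g * pb x₁ * g) * pu (star g * pb x₂ * g))).im


set_option linter.unusedSectionVars false

variable (e : HilbertBasis ℤ ℂ H)

lemma inner_expand (x y : H) : (inner ℂ x y : ℂ) = ∑' n, (inner ℂ x (e n) : ℂ) * inner ℂ (e n) y :=
  (e.tsum_inner_mul_inner x y).symm

lemma hasSum_normsq (ξ : H) :
    HasSum (fun n : ℤ => ‖(inner ℂ (e n) ξ : ℂ)‖ ^ 2) (‖ξ‖ ^ 2) := by
  have h2 := Complex.hasSum_re (e.hasSum_inner_mul_inner ξ ξ)
  convert h2 using 2 with n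
  · rw [← inner_conj_symm (𝕜 := ℂ) ξ (e n), Complex.conj_mul']
    norm_cast
  · rw [← inner_self_eq_norm_sq (𝕜 := ℂ) ξ]; rfl

lemma summable_normsq_inner (ξ : H) :
    Summable (fun n : ℤ => ‖(inner ℂ (e n) ξ : ℂ)‖ ^ 2) := (hasSum_normsq e ξ).summable

lemma tsum_normsq (ξ : H) : ∑' n : ℤ, ‖(inner ℂ (e n) ξ : ℂ)‖ ^ 2 = ‖ξ‖ ^ 2 :=
  (hasSum_normsq e ξ).tsum_eq

lemma entry_star (X : H →L[ℂ] H) (m n : ℤ) :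
    (inner ℂ (e m) (star X (e n)) : ℂ) = starRingEnd ℂ (inner ℂ (e n) (X (e m))) := by
  rw [star_eq_adjoint, ← inner_conj_symm (𝕜 := ℂ)]
  exact congrArg _ (adjoint_inner_left X (e m) (e n))

lemma hs_iff (X : H →L[ℂ] H) :
    IsHS e X ↔ Summable (fun p : ℤ × ℤ => ‖(inner ℂ (e p.2) (X (e p.1)) : ℂ)‖ ^ 2) := by
  have h0 : 0 ≤ fun p : ℤ × ℤ => ‖(inner ℂ (e p.2) (X (e p.1)) : ℂ)‖ ^ 2 :=
    fun p => sq_nonneg _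
  have key := summable_prod_of_nonneg h0
  have hrow : ∀ n : ℤ, Summable (fun m : ℤ => ‖(inner ℂ (e m) (X (e n)) : ℂ)‖ ^ 2) :=
    fun n => summable_normsq_inner e _
  have hcol : (fun n : ℤ => ∑' m : ℤ, ‖(inner ℂ (e m) (X (e n)) : ℂ)‖ ^ 2)
      = fun n : ℤ => ‖X (e n)‖ ^ 2 := funext fun n => tsum_normsq e _
  constructor
  · intro h
    exact key.mpr ⟨hrow, hcol ▸ h⟩
  · intro h
    have := (key.mp h).2
    rwa [hcol] at this

lemma hs_star {X : H →L[ℂ] H} (h : IsHS e X) : IsHS e (star X) := by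
  rw [hs_iff] at h ⊢
  have h2 := h.prod_symm
  simp only [Prod.snd_swap, Prod.fst_swap] at h2
  have : (fun p : ℤ × ℤ => ‖(inner ℂ (e p.2) (star X (e p.1)) : ℂ)‖ ^ 2)
      = fun p : ℤ × ℤ => ‖(inner ℂ (e p.1) (X (e p.2)) : ℂ)‖ ^ 2 := by
    funext p
    rw [entry_star, RCLike.norm_conj]
  rw [this]
  exact h2

lemma hs_mul_left {X : H →L[ℂ] H} (Y : H →L[ℂ] H) (h : IsHS e X) : IsHS e (Y * X) := by
  have hs : Summable (fun n : ℤ => ‖Y‖ ^ 2 * ‖X (e n)‖ ^ 2) := Summable.mul_left _ h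
  refine Summable.of_nonneg_of_le (fun n => sq_nonneg _) (fun n => ?_) hs
  have h1 : ‖(Y * X) (e n)‖ ≤ ‖Y‖ * ‖X (e n)‖ := Y.le_opNorm _
  calc ‖(Y * X) (e n)‖ ^ 2 ≤ (‖Y‖ * ‖X (e n)‖) ^ 2 :=
        pow_le_pow_left₀ (norm_nonneg _) h1 2
    _ = ‖Y‖ ^ 2 * ‖X (e n)‖ ^ 2 := by ring

lemma hs_mul_right {X : H →L[ℂ] H} (Y : H →L[ℂ] H) (h : IsHS e X) : IsHS e (X * Y) := by
  have h1 : IsHS e (star Y * star X) := hs_mul_left e (star Y) (hs_star e h)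
  have h2 := hs_star e h1
  rwa [star_mul, star_star, star_star] at h2

lemma hs_add {X Y : H →L[ℂ] H} (hX : IsHS e X) (hY : IsHS e Y) : IsHS e (X + Y) := by
  have hs : Summable (fun n : ℤ => 2 * ‖X (e n)‖ ^ 2 + 2 * ‖Y (e n)‖ ^ 2) :=
    (Summable.mul_left _ hX).add (Summable.mul_left _ hY)
  refine Summable.of_nonneg_of_le (fun n => sq_nonneg _) (fun n => ?_) hs
  have h1 : ‖(X + Y) (e n)‖ ≤ ‖X (e n)‖ + ‖Y (e n)‖ := by
    rw [ContinuousLinearMap.add_apply]; exact norm_add_le _ _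
  calc ‖(X + Y) (e n)‖ ^ 2 ≤ (‖X (e n)‖ + ‖Y (e n)‖) ^ 2 :=
        pow_le_pow_left₀ (norm_nonneg _) h1 2
    _ ≤ 2 * ‖X (e n)‖ ^ 2 + 2 * ‖Y (e n)‖ ^ 2 := by
        nlinarith [sq_nonneg (‖X (e n)‖ - ‖Y (e n)‖)]

lemma eq_zero_of_entries (T : H →L[ℂ] H)
    (h : ∀ m n : ℤ, (inner ℂ (e m) (T (e n)) : ℂ) = 0) : T = 0 := by
  have hv : ∀ n : ℤ, T (e n) = 0 := by
    intro n
    have hn : ‖T (e n)‖ ^ 2 = 0 := by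
      rw [← tsum_normsq e (T (e n))]
      have : (fun m : ℤ => ‖(inner ℂ (e m) (T (e n)) : ℂ)‖ ^ 2) = fun _ => (0 : ℝ) := by
        funext m; rw [h m n]; simp
      rw [this, tsum_zero]
    have := pow_eq_zero_iff (n := 2) (by norm_num) |>.mp hn
    exact norm_eq_zero.mp this
  have hd : Dense (↑(Submodule.span ℂ (Set.range fun i : ℤ => e i)) : Set H) :=
    Submodule.dense_iff_topologicalClosure_eq_top.mpr e.dense_span
  exact ContinuousLinearMap.ext_on hd (by rintro x ⟨n, rfl⟩; simpa using hv n)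

lemma skew_tri_eq_zero {T : H →L[ℂ] H} (h1 : SkewHerm T) (h2 : UpperTri e T)
    (h3 : RealDiag e T) : T = 0 := by
  have key : ∀ m n : ℤ, (inner ℂ (e m) (T (e n)) : ℂ)
      = -starRingEnd ℂ (inner ℂ (e n) (T (e m))) := by
    intro m n
    have := entry_star e T m n
    rw [h1] at this
    have h4 : (inner ℂ (e m) ((-T) (e n)) : ℂ) = -(inner ℂ (e m) (T (e n)) : ℂ) := by
      rw [ContinuousLinearMap.neg_apply, inner_neg_right]
    rw [h4] at this
    linear_combination -this
  refine eq_zero_of_entries e T (fun m n => ?_)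
  rcases lt_trichotomy m n with h | h | h
  · exact h2 m n h
  · subst h
    have h5 := key m m
    have h6 := h3 m
    set z := (inner ℂ (e m) (T (e m)) : ℂ) with hz
    apply Complex.ext
    · have := congrArg Complex.re h5
      simp only [Complex.neg_re, Complex.conj_re] at this
      simp only [Complex.zero_re]
      linarith
    · exact h6
  · rw [key m n, h2 n m h]
    simp

/-- the (n,m) product entry family of `X * Y` -/
def cEnt (X Y : H →L[ℂ] H) (p : ℤ × ℤ) : ℂ :=
  (inner ℂ (e p.1) (X (e p.2)) : ℂ) * (inner ℂ (e p.2) (Y (e p.1)) : ℂ)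

lemma summable_cEnt {X Y : H →L[ℂ] H} (hX : IsHS e X) (hY : IsHS e Y) :
    Summable (cEnt e X Y) := by
  have h1 : Summable (fun p : ℤ × ℤ => ‖(inner ℂ (e p.1) (X (e p.2)) : ℂ)‖ ^ 2) := by
    have := ((hs_iff e X).mp hX).prod_symm
    simpa only [Prod.fst_swap, Prod.snd_swap] using this
  have h2 : Summable (fun p : ℤ × ℤ => ‖(inner ℂ (e p.2) (Y (e p.1)) : ℂ)‖ ^ 2) :=
    (hs_iff e Y).mp hY
  refine Summable.of_norm_bounded (((h1.add h2).div_const 2)) (fun p => ?_)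
  have ha : (0:ℝ) ≤ ‖(inner ℂ (e p.1) (X (e p.2)) : ℂ)‖ := norm_nonneg _
  have hb : (0:ℝ) ≤ ‖(inner ℂ (e p.2) (Y (e p.1)) : ℂ)‖ := norm_nonneg _
  rw [cEnt, norm_mul]
  nlinarith [sq_nonneg (‖(inner ℂ (e p.1) (X (e p.2)) : ℂ)‖ - ‖(inner ℂ (e p.2) (Y (e p.1)) : ℂ)‖)]

lemma diag_hasSum (X Y : H →L[ℂ] H) (n : ℤ) :
    (inner ℂ (e n) ((X * Y) (e n)) : ℂ) = ∑' m : ℤ, cEnt e X Y (n, m) := by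
  have h0 : (inner ℂ (e n) ((X * Y) (e n)) : ℂ) = inner ℂ (adjoint X (e n)) (Y (e n)) :=
    (adjoint_inner_left X (Y (e n)) (e n)).symm
  rw [h0, inner_expand e (adjoint X (e n)) (Y (e n))]
  congr 1
  funext m
  rw [cEnt]
  congr 1
  exact adjoint_inner_left X (e m) (e n)

lemma trace_eq_double {X Y : H →L[ℂ] H} (hX : IsHS e X) (hY : IsHS e Y) :
    traceOp e (X * Y) = ∑' p : ℤ × ℤ, cEnt e X Y p := by
  rw [traceOp]
  rw [Summable.tsum_prod' (summable_cEnt e hX hY) (fun n => (summable_cEnt e hX hY).prod_factor n)]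
  congr 1
  funext n
  exact diag_hasSum e X Y n

lemma summable_diag {X Y : H →L[ℂ] H} (hX : IsHS e X) (hY : IsHS e Y) :
    Summable (fun n : ℤ => (inner ℂ (e n) ((X * Y) (e n)) : ℂ)) := by
  have hc := summable_cEnt e hX hY
  have hg : HasSum (fun n : ℤ => ∑' m : ℤ, cEnt e X Y (n, m)) (∑' p : ℤ × ℤ, cEnt e X Y p) :=
    HasSum.prod_fiberwise hc.hasSum (fun n => (hc.prod_factor n).hasSum)
  have := hg.summable
  have heq : (fun n : ℤ => (inner ℂ (e n) ((X * Y) (e n)) : ℂ))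
      = fun n : ℤ => ∑' m : ℤ, cEnt e X Y (n, m) := funext fun n => diag_hasSum e X Y n
  rw [heq]
  exact this

lemma trace_comm {X Y : H →L[ℂ] H} (hX : IsHS e X) (hY : IsHS e Y) :
    traceOp e (X * Y) = traceOp e (Y * X) := by
  rw [trace_eq_double e hX hY, trace_eq_double e hY hX]
  rw [← Equiv.tsum_eq (Equiv.prodComm ℤ ℤ) (cEnt e X Y)]
  congr 1
  funext p
  simp only [Equiv.prodComm_apply, cEnt, Prod.fst_swap, Prod.snd_swap]
  ring

lemma summable_diag_add {X Y : H →L[ℂ] H}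
    (hX : Summable (fun n : ℤ => (inner ℂ (e n) (X (e n)) : ℂ)))
    (hY : Summable (fun n : ℤ => (inner ℂ (e n) (Y (e n)) : ℂ))) :
    Summable (fun n : ℤ => (inner ℂ (e n) ((X + Y) (e n)) : ℂ)) := by
  have h : (fun n : ℤ => (inner ℂ (e n) ((X + Y) (e n)) : ℂ))
      = fun n : ℤ => (inner ℂ (e n) (X (e n)) : ℂ) + (inner ℂ (e n) (Y (e n)) : ℂ) := by
    funext n; rw [ContinuousLinearMap.add_apply, inner_add_right]
  rw [h]; exact hX.add hY

lemma trace_add {X Y : H →L[ℂ] H}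
    (hX : Summable (fun n : ℤ => (inner ℂ (e n) (X (e n)) : ℂ)))
    (hY : Summable (fun n : ℤ => (inner ℂ (e n) (Y (e n)) : ℂ))) :
    traceOp e (X + Y) = traceOp e X + traceOp e Y := by
  rw [traceOp, traceOp, traceOp, ← Summable.tsum_add hX hY]
  congr 1
  funext n
  rw [ContinuousLinearMap.add_apply, inner_add_right]

lemma conj_trace {X : H →L[ℂ] H}
    (hX : Summable (fun n : ℤ => (inner ℂ (e n) (X (e n)) : ℂ))) :
    starRingEnd ℂ (traceOp e X) = traceOp e (star X) := by
  rw [traceOp, traceOp]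
  have h1 := Complex.hasSum_conj'.mpr hX.hasSum
  have h2 : (fun n : ℤ => starRingEnd ℂ (inner ℂ (e n) (X (e n)) : ℂ))
      = fun n : ℤ => (inner ℂ (e n) (star X (e n)) : ℂ) :=
    funext fun n => (entry_star e X n n).symm
  rw [h2] at h1
  exact h1.tsum_eq.symm

lemma im_trace_skew_skew {X Y : H →L[ℂ] H} (hX : IsHS e X) (hY : IsHS e Y)
    (sX : SkewHerm X) (sY : SkewHerm Y) : (traceOp e (X * Y)).im = 0 := by
  rw [← Complex.conj_eq_iff_im]
  rw [conj_trace e (summable_diag e hX hY)]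
  have hst : star (X * Y) = Y * X := by
    rw [star_mul, sX, sY, neg_mul, mul_neg, neg_neg]
  rw [hst]
  exact (trace_comm e hX hY).symm

lemma im_trace_tri_tri {X Y : H →L[ℂ] H} (hX : IsHS e X) (hY : IsHS e Y)
    (tX : UpperTri e X) (dX : RealDiag e X) (tY : UpperTri e Y) (dY : RealDiag e Y) :
    (traceOp e (X * Y)).im = 0 := by
  have hd := summable_diag e hX hY
  have himsum := hd.hasSum.mapL Complex.imCLM
  have hzero : (fun n : ℤ => Complex.imCLM (inner ℂ (e n) ((X * Y) (e n)) : ℂ))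
      = fun _ : ℤ => (0 : ℝ) := by
    funext n
    have hdiag : (inner ℂ (e n) ((X * Y) (e n)) : ℂ) = ∑' m : ℤ, cEnt e X Y (n, m) :=
      diag_hasSum e X Y n
    have hsingle : ∑' m : ℤ, cEnt e X Y (n, m) = cEnt e X Y (n, n) := by
      refine tsum_eq_single n (fun m hm => ?_)
      rcases lt_or_gt_of_ne hm with h | h
      · rw [cEnt]
        rw [tY m n h, mul_zero]
      · rw [cEnt]
        rw [tX n m h, zero_mul]
    simp only [Complex.imCLM_apply]
    rw [hdiag, hsingle, cEnt, Complex.mul_im, dX n, dY n]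
    simp
  rw [hzero] at himsum
  have h0 : HasSum (fun _ : ℤ => (0 : ℝ)) 0 := hasSum_zero
  have := himsum.unique h0
  simpa [traceOp] using this

lemma skew_conj {g u : H →L[ℂ] H} (hu : SkewHerm u) : SkewHerm (g * u * star g) := by
  rw [SkewHerm, star_mul, star_mul, star_star, hu]
  simp only [mul_neg, neg_mul, mul_assoc]

lemma skew_add {u v : H →L[ℂ] H} (hu : SkewHerm u) (hv : SkewHerm v) : SkewHerm (u + v) := by
  rw [SkewHerm, star_add, hu, hv, neg_add]

lemma skew_sub {u v : H →L[ℂ] H} (hu : SkewHerm u) (hv : SkewHerm v) : SkewHerm (u - v) := by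
  rw [SkewHerm, star_sub, hu, hv, neg_sub, neg_sub_neg]

lemma inner_self_adjoint_sq (S : H →L[ℂ] H) (hSsa : adjoint S = S) (ξ : H) :
    (inner ℂ ξ ((S * S) ξ) : ℂ) = inner ℂ (S ξ) (S ξ) := by
  rw [ContinuousLinearMap.mul_apply]
  rw [← (adjoint_inner_left S (S ξ) ξ), hSsa]

lemma tc_hs {A : H →L[ℂ] H} (h : IsTC e A) : IsHS e A := by
  set T := absCLM A with hT
  have hT0 : (0 : H →L[ℂ] H) ≤ T := CFC.sqrt_nonneg _
  have hTadj : adjoint T = T := by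
    rw [← star_eq_adjoint]; exact IsSelfAdjoint.of_nonneg hT0
  have hT2 : T * T = star A * A := by
    have h2 := CFC.sq_sqrt (star A * A) (star_mul_self_nonneg A)
    rwa [pow_two] at h2
  set S := CFC.sqrt T with hS
  have hS0 : (0 : H →L[ℂ] H) ≤ S := CFC.sqrt_nonneg _
  have hSadj : adjoint S = S := by
    rw [← star_eq_adjoint]; exact IsSelfAdjoint.of_nonneg hS0
  have hS2 : S * S = T := by
    have h2 := CFC.sq_sqrt T hT0
    rwa [pow_two] at h2
  have key1 : ∀ ξ : H, ‖A ξ‖ ^ 2 = ‖T ξ‖ ^ 2 := by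
    intro ξ
    have e1 : (inner ℂ ξ ((star A * A) ξ) : ℂ) = inner ℂ (A ξ) (A ξ) := by
      rw [ContinuousLinearMap.mul_apply, star_eq_adjoint, adjoint_inner_right]
    have e2 := inner_self_adjoint_sq T hTadj ξ
    rw [hT2, e1] at e2
    have := congrArg Complex.re e2
    rw [← inner_self_eq_norm_sq (𝕜 := ℂ) (A ξ), ← inner_self_eq_norm_sq (𝕜 := ℂ) (T ξ)]
    exact this
  have key2 : ∀ ξ : H, ((inner ℂ ξ (T ξ) : ℂ)).re = ‖S ξ‖ ^ 2 := by
    intro ξ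
    have e2 := inner_self_adjoint_sq S hSadj ξ
    rw [hS2] at e2
    rw [e2, ← inner_self_eq_norm_sq (𝕜 := ℂ) (S ξ)]
    rfl
  refine Summable.of_nonneg_of_le (fun n => sq_nonneg _) (fun n => ?_)
    (Summable.mul_left (‖S‖ ^ 2) h)
  rw [key1 (e n)]
  have hb : ‖T (e n)‖ ≤ ‖S‖ * ‖S (e n)‖ := by
    rw [← hS2, ContinuousLinearMap.mul_apply]
    exact S.le_opNorm _
  calc ‖T (e n)‖ ^ 2 ≤ (‖S‖ * ‖S (e n)‖) ^ 2 := pow_le_pow_left₀ (norm_nonneg _) hb 2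
    _ = ‖S‖ ^ 2 * ‖S (e n)‖ ^ 2 := by ring
    _ = ‖S‖ ^ 2 * ((inner ℂ (e n) (T (e n)) : ℂ)).re := by rw [key2 (e n)]

lemma tri_sub {b b' : H →L[ℂ] H} (hb : UpperTri e b ∧ RealDiag e b)
    (hb' : UpperTri e b' ∧ RealDiag e b') :
    UpperTri e (b - b') ∧ RealDiag e (b - b') := by
  constructor
  · intro m n hmn
    rw [ContinuousLinearMap.sub_apply, inner_sub_right, hb.1 m n hmn, hb'.1 m n hmn, sub_zero]
  · intro n
    rw [ContinuousLinearMap.sub_apply, inner_sub_right, Complex.sub_im, hb.2 n, hb'.2 n, sub_zero]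

lemma decomp_unique {u u' b b' : H →L[ℂ] H} (hu : SkewHerm u) (hu' : SkewHerm u')
    (hb : UpperTri e b ∧ RealDiag e b) (hb' : UpperTri e b' ∧ RealDiag e b')
    (heq : u + b = u' + b') : b = b' := by
  have hT : u - u' = b' - b := sub_eq_sub_iff_add_eq_add.mpr (by rw [heq, add_comm])
  have hskew : SkewHerm (b' - b) := hT ▸ skew_sub hu hu'
  have htri := tri_sub e hb' hb
  have := skew_tri_eq_zero e hskew htri.1 htri.2
  rw [sub_eq_zero] at this
  exact this.symm

/-- for every unitary `g` and trace-class `x₃, x`,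
`Π_r(g)(x₃, x) = −Im Tr(x · g p_{u₂}(g⁻¹ p_{b₂⁺}(x₃) g) g⁻¹)`; that is, the interior
product of `Π_r(g)` with `x₃` is represented by the bounded skew-hermitian operator
`−g p_{u₂}(g⁻¹ p_{b₂⁺}(x₃) g) g⁻¹` via the pairing `(a, b) ↦ Im Tr(a b)`. -/
theorem statement_14 {H : Type*} [NormedAddCommGroup H] [InnerProductSpace ℂ H]
    [CompleteSpace H] (e : HilbertBasis ℤ ℂ H)
    (pu pb : (H →L[ℂ] H) → (H →L[ℂ] H))
    (hdec : ∀ x : H →L[ℂ] H, IsHS e x →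
      InU2 e (pu x) ∧ InB2 e (pb x) ∧ pu x + pb x = x)
    (g : H →L[ℂ] H) (hg : g ∈ unitary (H →L[ℂ] H))
    (x₃ x : H →L[ℂ] H) (hx₃ : IsTC e x₃) (hx : IsTC e x) :
    Pir e pu pb g x₃ x =
      - (traceOp e (x * (g * pu (star g * pb x₃ * g) * star g))).im ∧
    SkewHerm (g * pu (star g * pb x₃ * g) * star g) := by
  obtain ⟨hg1, hg2⟩ := Unitary.mem_iff.mp hg
  have hx₃HS : IsHS e x₃ := tc_hs e hx₃
  have hxHS : IsHS e x := tc_hs e hx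
  obtain ⟨hu3, hb3, hsum3⟩ := hdec x₃ hx₃HS
  obtain ⟨hu, hb, hsum⟩ := hdec x hxHS
  set A : H →L[ℂ] H := star g * pb x₃ * g with hA
  set B : H →L[ℂ] H := star g * pb x * g with hB
  set C : H →L[ℂ] H := star g * x * g with hC
  have hAHS : IsHS e A := hs_mul_right e g (hs_mul_left e (star g) hb3.1)
  have hBHS : IsHS e B := hs_mul_right e g (hs_mul_left e (star g) hb.1)
  have hCHS : IsHS e C := hs_mul_right e g (hs_mul_left e (star g) hxHS)
  obtain ⟨hpuA, hpbA, hsA⟩ := hdec A hAHS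
  obtain ⟨hpuB, hpbB, hsB⟩ := hdec B hBHS
  obtain ⟨hpuC, hpbC, hsC⟩ := hdec C hCHS
  -- skew-hermiticity of the representing operator
  have hskewrep : SkewHerm (g * pu A * star g) := skew_conj hpuA.2
  refine ⟨?_, hskewrep⟩
  -- pb C = pb B
  have hu0 : SkewHerm (star g * pu x * g) := by
    have h := skew_conj (g := star g) hu.2
    rwa [star_star] at h
  have hCsplit : C = (star g * pu x * g) + B := by
    rw [hC, hB]
    conv_lhs => rw [← hsum]
    rw [mul_add, add_mul]
  have hdecomp2 : ((star g * pu x * g) + pu B) + pb B = C := by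
    rw [add_assoc, hsB, hCsplit]
  have hpbCB : pb C = pb B :=
    decomp_unique e hpuC.2 (skew_add hu0 hpuB.2) hpbC.2 hpbB.2 (by rw [hsC, ← hdecomp2])
  -- LHS = Im Tr (pb A * pu B)
  have hLHS : Pir e pu pb g x₃ x = (traceOp e (pb A * pu B)).im := by
    have hexp : A * pu B = pu A * pu B + pb A * pu B := by
      rw [← add_mul, hsA]
    have : traceOp e (A * pu B) = traceOp e (pu A * pu B) + traceOp e (pb A * pu B) := by
      rw [hexp]
      exact trace_add e (summable_diag e hpuA.1 hpuB.1) (summable_diag e hpbA.1 hpuB.1)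
    rw [Pir, ← hA, ← hB, this, Complex.add_im,
      im_trace_skew_skew e hpuA.1 hpuB.1 hpuA.2 hpuB.2, zero_add]
  -- RHS = - Im Tr (pb B * pu A)
  have hRHS : (traceOp e (x * (g * pu A * star g))).im = (traceOp e (pb B * pu A)).im := by
    have e1 : x * (g * pu A * star g) = (x * g) * (pu A * star g) := by
      simp only [mul_assoc]
    have e2 : (pu A * star g) * (x * g) = pu A * C := by
      have h3 : g * (star g * (x * g)) = x * g := by
        rw [← mul_assoc, hg2, one_mul]
      simp only [hC, mul_assoc, h3]
    have hxg : IsHS e (x * g) := hs_mul_right e g hxHS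
    have hAg : IsHS e (pu A * star g) := hs_mul_right e (star g) hpuA.1
    have t1 : traceOp e (x * (g * pu A * star g)) = traceOp e (pu A * C) := by
      rw [e1, trace_comm e hxg hAg, e2]
    have t2 : traceOp e (pu A * C) = traceOp e (C * pu A) :=
      trace_comm e hpuA.1 hCHS
    have hexp : C * pu A = pu C * pu A + pb C * pu A := by
      rw [← add_mul, hsC]
    have t3 : traceOp e (C * pu A) = traceOp e (pu C * pu A) + traceOp e (pb C * pu A) := by
      rw [hexp]
      exact trace_add e (summable_diag e hpuC.1 hpuA.1) (summable_diag e hpbC.1 hpuA.1)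
    rw [t1, t2, t3, Complex.add_im,
      im_trace_skew_skew e hpuC.1 hpuA.1 hpuC.2 hpuA.2, zero_add, hpbCB]
  -- antisymmetry: Im Tr(pb A * pu B) + Im Tr(pb B * pu A) = 0
  have hanti : (traceOp e (pb A * pu B)).im + (traceOp e (pb B * pu A)).im = 0 := by
    -- expand Tr(A * B)
    have hexp : A * B = (pu A * pu B + pu A * pb B) + (pb A * pu B + pb A * pb B) := by
      conv_lhs => rw [← hsA, ← hsB]
      rw [add_mul, mul_add, mul_add]
    have t4 : traceOp e (A * B) =
        (traceOp e (pu A * pu B) + traceOp e (pu A * pb B)) +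
        (traceOp e (pb A * pu B) + traceOp e (pb A * pb B)) := by
      rw [hexp]
      rw [trace_add e (summable_diag_add e (summable_diag e hpuA.1 hpuB.1) (summable_diag e hpuA.1 hpbB.1))
            (summable_diag_add e (summable_diag e hpbA.1 hpuB.1) (summable_diag e hpbA.1 hpbB.1)),
          trace_add e (summable_diag e hpuA.1 hpuB.1) (summable_diag e hpuA.1 hpbB.1),
          trace_add e (summable_diag e hpbA.1 hpuB.1) (summable_diag e hpbA.1 hpbB.1)]
    -- Tr(A * B) = Tr(pb x * pb x₃), which has zero imaginary part
    have e3 : A * B = (star g * pb x₃) * (pb x * g) := by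
      have h3 : g * (star g * (pb x * g)) = pb x * g := by
        rw [← mul_assoc, hg2, one_mul]
      simp only [hA, hB, mul_assoc, h3]
    have e4 : (pb x * g) * (star g * pb x₃) = pb x * pb x₃ := by
      have h3 : g * (star g * pb x₃) = pb x₃ := by
        rw [← mul_assoc, hg2, one_mul]
      simp only [mul_assoc, h3]
    have hgb3 : IsHS e (star g * pb x₃) := hs_mul_left e (star g) hb3.1
    have hbg : IsHS e (pb x * g) := hs_mul_right e g hb.1
    have t5 : traceOp e (A * B) = traceOp e (pb x * pb x₃) := by
      rw [e3, trace_comm e hgb3 hbg, e4]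
    have him : (traceOp e (A * B)).im = 0 := by
      rw [t5]
      exact im_trace_tri_tri e hb.1 hb3.1 hb.2.1 hb.2.2 hb3.2.1 hb3.2.2
    have h6 : (traceOp e (pu A * pu B)).im = 0 :=
      im_trace_skew_skew e hpuA.1 hpuB.1 hpuA.2 hpuB.2
    have h7 : (traceOp e (pb A * pb B)).im = 0 :=
      im_trace_tri_tri e hpbA.1 hpbB.1 hpbA.2.1 hpbA.2.2 hpbB.2.1 hpbB.2.2
    have h8 : traceOp e (pu A * pb B) = traceOp e (pb B * pu A) :=
      trace_comm e hpuA.1 hpbB.1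
    have := congrArg Complex.im t4
    rw [him, h8] at this
    simp only [Complex.add_im] at this
    rw [h6, h7] at this
    linarith
  rw [hLHS, hRHS]
  linarith

end PL
end
end

section
/- Let g be a unitary operator on H and x₁, x₂, x₃ trace-class operators on H, and set A = g⁻¹ p_{b₂⁺}(x₁) g, B = g⁻¹ p_{b₂⁺}(x₂) g, C = g⁻¹ p_{b₂⁺}(x₃) g (Hilbert–Schmidt operators). Then the six-term cyclic sum vanishes: Im Tr(p_{u₂}(C)[p_{b₂⁺}(A), p_{b₂⁺}(B)]) + Im Tr(p_{u₂}(C)[p_{b₂⁺}(A), p_{u₂}(B)]) + Im Tr(p_{u₂}(A)[p_{b₂⁺}(B), p_{b₂⁺}(C)]) + Im Tr(p_{u₂}(A)[p_{b₂⁺}(B), p_{u₂}(C)]) + Im Tr(p_{u₂}(B)[p_{b₂⁺}(C), p_{b₂⁺}(A)]) + Im Tr(p_{u₂}(B)[p_{b₂⁺}(C), p_{u₂}(A)]) = 0, where [·,·] is the commutator. -/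
/- Setting: `H` is a separable complex Hilbert space with a fixed orthonormal
(Hilbert) basis `e` indexed by `ℤ`. -/

set_option synthInstance.maxHeartbeats 1000000
set_option maxHeartbeats 2000000

noncomputable section
open ContinuousLinearMap

namespace PL

variable {H : Type*} [NormedAddCommGroup H] [InnerProductSpace ℂ H] [CompleteSpace H]

set_option linter.unusedSectionVars false

-- ### basic Parseval facts

local notation "⟪" x ", " y "⟫" => (inner ℂ x y : ℂ)

lemma hasSum_coeff_mul (e : HilbertBasis ℤ ℂ H) (x y : H) :
    HasSum (fun m : ℤ => ⟪x, e m⟫ * ⟪e m, y⟫) ⟪x, y⟫ :=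
  e.hasSum_inner_mul_inner x y

lemma hasSum_norm_sq (e : HilbertBasis ℤ ℂ H) (v : H) :
    HasSum (fun m : ℤ => ‖⟪e m, v⟫‖ ^ 2) (‖v‖ ^ 2) := by
  have h := (Complex.hasSum_iff _ _).mp (hasSum_coeff_mul e v v)
  have h1 := h.1
  have e1 : (fun m : ℤ => (⟪v, e m⟫ * ⟪e m, v⟫).re) = fun m : ℤ => ‖⟪e m, v⟫‖ ^ 2 := by
    funext m
    rw [← inner_conj_symm (e m) v]
    simp only [Complex.mul_re, Complex.conj_re, Complex.conj_im,
      Complex.sq_norm, Complex.normSq_apply, neg_mul, sub_neg_eq_add]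
    ring
  have e2 : (⟪v, v⟫).re = ‖v‖ ^ 2 := by
    simpa using inner_self_eq_norm_sq (𝕜 := ℂ) v
  rw [e1, e2] at h1
  exact h1


lemma summable_norm_sq_iff (e : HilbertBasis ℤ ℂ H) (X : H →L[ℂ] H) :
    IsHS e X ↔ Summable (fun p : ℤ × ℤ => ‖⟪e p.2, X (e p.1)⟫‖ ^ 2) := by
  have hnn : 0 ≤ fun p : ℤ × ℤ => ‖⟪e p.2, X (e p.1)⟫‖ ^ 2 := fun p => sq_nonneg _
  rw [summable_prod_of_nonneg hnn]
  constructor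
  · intro h
    refine ⟨fun n => (hasSum_norm_sq e (X (e n))).summable, ?_⟩
    refine h.congr fun n => ?_
    exact ((hasSum_norm_sq e (X (e n))).tsum_eq).symm
  · rintro ⟨_, h2⟩
    refine h2.congr fun n => ?_
    exact (hasSum_norm_sq e (X (e n))).tsum_eq

/-- entries of an HS operator are square-summable, orientation `(column, row)`. -/
lemma IsHS.summable_entries {e : HilbertBasis ℤ ℂ H} {X : H →L[ℂ] H} (h : IsHS e X) :
    Summable (fun p : ℤ × ℤ => ‖⟪e p.2, X (e p.1)⟫‖ ^ 2) :=
  (summable_norm_sq_iff e X).mp h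

lemma IsHS.summable_entries' {e : HilbertBasis ℤ ℂ H} {X : H →L[ℂ] H} (h : IsHS e X) :
    Summable (fun p : ℤ × ℤ => ‖⟪e p.1, X (e p.2)⟫‖ ^ 2) :=
  ((summable_norm_sq_iff e X).mp h).prod_symm

lemma isHS_star {e : HilbertBasis ℤ ℂ H} {X : H →L[ℂ] H} (h : IsHS e X) :
    IsHS e (star X) := by
  rw [summable_norm_sq_iff]
  have key : ∀ p : ℤ × ℤ, ‖⟪e p.2, (star X) (e p.1)⟫‖ ^ 2 = ‖⟪e p.1, X (e p.2)⟫‖ ^ 2 := by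
    intro p
    rw [ContinuousLinearMap.star_eq_adjoint, ContinuousLinearMap.adjoint_inner_right]
    exact congrArg (· ^ 2) (norm_inner_symm _ _)
  exact h.summable_entries'.congr fun p => (key p).symm

lemma IsHS.const_mul {e : HilbertBasis ℤ ℂ H} {X : H →L[ℂ] H} (h : IsHS e X)
    (T : H →L[ℂ] H) : IsHS e (T * X) := by
  refine Summable.of_nonneg_of_le (fun n => sq_nonneg _)
    (fun n => ?_) (h.mul_left (‖T‖ ^ 2))
  rw [ContinuousLinearMap.mul_apply]
  calc ‖T (X (e n))‖ ^ 2 ≤ (‖T‖ * ‖X (e n)‖) ^ 2 := by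
        apply pow_le_pow_left₀ (norm_nonneg _) (T.le_opNorm _)
    _ = ‖T‖ ^ 2 * ‖X (e n)‖ ^ 2 := by ring

lemma isHS_mul_const {e : HilbertBasis ℤ ℂ H} {X : H →L[ℂ] H} (h : IsHS e X)
    (T : H →L[ℂ] H) : IsHS e (X * T) := by
  have := isHS_star ((isHS_star h).const_mul (star T))
  simpa [star_mul] using this

lemma IsHS.mul {e : HilbertBasis ℤ ℂ H} {X Y : H →L[ℂ] H} (h : IsHS e X)
    (hY : IsHS e Y) : IsHS e (X * Y) := hY.const_mul X

/-- diagonal of a product of two HS operators is (absolutely) summable -/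
lemma summable_diag_mul {e : HilbertBasis ℤ ℂ H} {X Y : H →L[ℂ] H}
    (hX : IsHS e X) (hY : IsHS e Y) :
    Summable (fun n : ℤ => ⟪e n, (X * Y) (e n)⟫) := by
  apply Summable.of_norm
  have hb : ∀ n : ℤ, ‖⟪e n, (X * Y) (e n)⟫‖ ≤
      (‖(ContinuousLinearMap.adjoint X) (e n)‖ ^ 2 + ‖Y (e n)‖ ^ 2) / 2 := by
    intro n
    rw [ContinuousLinearMap.mul_apply, ← ContinuousLinearMap.adjoint_inner_left]
    calc ‖⟪(ContinuousLinearMap.adjoint X) (e n), Y (e n)⟫‖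
        ≤ ‖(ContinuousLinearMap.adjoint X) (e n)‖ * ‖Y (e n)‖ := norm_inner_le_norm _ _
      _ ≤ (‖(ContinuousLinearMap.adjoint X) (e n)‖ ^ 2 + ‖Y (e n)‖ ^ 2) / 2 := by
          nlinarith [sq_nonneg (‖(ContinuousLinearMap.adjoint X) (e n)‖ - ‖Y (e n)‖)]
  have hXs : IsHS e (ContinuousLinearMap.adjoint X) := by
    have := isHS_star hX; rwa [ContinuousLinearMap.star_eq_adjoint] at this
  exact Summable.of_nonneg_of_le (fun n => norm_nonneg _) hb ((hXs.add hY).div_const 2)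


-- ### traceOp basics

lemma traceOp_add {e : HilbertBasis ℤ ℂ H} {X Y : H →L[ℂ] H}
    (hX : Summable (fun n : ℤ => ⟪e n, X (e n)⟫))
    (hY : Summable (fun n : ℤ => ⟪e n, Y (e n)⟫)) :
    traceOp e (X + Y) = traceOp e X + traceOp e Y := by
  unfold traceOp
  rw [← Summable.tsum_add hX hY]
  exact tsum_congr fun n => by simp [inner_add_right]

lemma traceOp_neg {e : HilbertBasis ℤ ℂ H} (X : H →L[ℂ] H) :
    traceOp e (-X) = - traceOp e X := by
  unfold traceOp
  rw [← tsum_neg]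
  exact tsum_congr fun n => by simp [inner_neg_right]

lemma traceOp_sub {e : HilbertBasis ℤ ℂ H} {X Y : H →L[ℂ] H}
    (hX : Summable (fun n : ℤ => ⟪e n, X (e n)⟫))
    (hY : Summable (fun n : ℤ => ⟪e n, Y (e n)⟫)) :
    traceOp e (X - Y) = traceOp e X - traceOp e Y := by
  rw [sub_eq_add_neg, traceOp_add hX (by simpa [inner_neg_right] using hY.neg),
    traceOp_neg, sub_eq_add_neg]

lemma traceOp_star {e : HilbertBasis ℤ ℂ H} (X : H →L[ℂ] H) :
    traceOp e (star X) = (starRingEnd ℂ) (traceOp e X) := by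
  unfold traceOp
  calc ∑' n : ℤ, ⟪e n, (star X) (e n)⟫
      = ∑' n : ℤ, star ⟪e n, X (e n)⟫ := by
        refine tsum_congr fun n => ?_
        rw [ContinuousLinearMap.star_eq_adjoint, ContinuousLinearMap.adjoint_inner_right]
        rw [← inner_conj_symm (X (e n)) (e n)]
        rfl
    _ = star (∑' n : ℤ, ⟪e n, X (e n)⟫) := tsum_star.symm

-- ### the master lemma: trace of a product, invariance under unitary conjugation

lemma trace_conj_mul {e : HilbertBasis ℤ ℂ H} {g X Y : H →L[ℂ] H}
    (hgl : star g * g = 1) (hgr : g * star g = 1)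
    (hX : IsHS e X) (hY : IsHS e Y) :
    traceOp e ((star g * X * g) * (star g * Y * g)) = traceOp e (Y * X) := by
  set G : H →L[ℂ] H := star g with hG
  have hGadj : G = ContinuousLinearMap.adjoint g := ContinuousLinearMap.star_eq_adjoint g
  have hgG : ∀ v : H, g (G v) = v := by
    intro v; rw [← ContinuousLinearMap.mul_apply, hgr, ContinuousLinearMap.one_apply]
  have hGi : ∀ a b : H, ⟪G a, G b⟫ = ⟪a, b⟫ := by
    intro a b
    rw [hGadj, ContinuousLinearMap.adjoint_inner_left, ← hGadj, hgG]
  set u : ℤ → ℤ → ℂ := fun n m =>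
    ⟪g (e n), X (e m)⟫ * ⟪(ContinuousLinearMap.adjoint Y) (e m), g (e n)⟫ with hu
  have hrow : ∀ n : ℤ, HasSum (fun m => u n m)
      (⟪e n, ((star g * X * g) * (star g * Y * g)) (e n)⟫) := by
    intro n
    have hdiag : ⟪e n, ((star g * X * g) * (star g * Y * g)) (e n)⟫
        = ⟪(ContinuousLinearMap.adjoint X) (g (e n)), Y (g (e n))⟫ := by
      have happ : ((star g * X * g) * (star g * Y * g)) (e n)
          = G (X (Y (g (e n)))) := by
        simp only [ContinuousLinearMap.mul_apply, ← hG]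
        rw [hgG]
      rw [happ, hG, ContinuousLinearMap.star_eq_adjoint,
        ContinuousLinearMap.adjoint_inner_right,
        ← ContinuousLinearMap.adjoint_inner_left X]
    rw [hdiag]
    have h := hasSum_coeff_mul e ((ContinuousLinearMap.adjoint X) (g (e n))) (Y (g (e n)))
    refine h.congr_fun fun m => ?_
    simp only [hu]
    rw [ContinuousLinearMap.adjoint_inner_left X, ContinuousLinearMap.adjoint_inner_left Y]
  have hcol : ∀ m : ℤ, HasSum (fun n => u n m) (⟪e m, (Y * X) (e m)⟫) := by
    intro m
    have hdiag : ⟪e m, (Y * X) (e m)⟫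
        = ⟪G ((ContinuousLinearMap.adjoint Y) (e m)), G (X (e m))⟫ := by
      rw [hGi, ContinuousLinearMap.mul_apply, ← ContinuousLinearMap.adjoint_inner_left Y]
    rw [hdiag]
    have h := hasSum_coeff_mul e (G ((ContinuousLinearMap.adjoint Y) (e m))) (G (X (e m)))
    refine h.congr_fun fun n => ?_
    simp only [hu]
    have e1 : ⟪G ((ContinuousLinearMap.adjoint Y) (e m)), e n⟫
        = ⟪(ContinuousLinearMap.adjoint Y) (e m), g (e n)⟫ := by
      rw [hGadj, ContinuousLinearMap.adjoint_inner_left]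
    have e2 : ⟪e n, G (X (e m))⟫ = ⟪g (e n), X (e m)⟫ := by
      rw [hGadj, ContinuousLinearMap.adjoint_inner_right]
    rw [e1, e2, mul_comm]
  have hZ1 : IsHS e (G * X) := hX.const_mul G
  have hZ2 : IsHS e (G * star Y) := (isHS_star hY).const_mul G
  have husum : Summable (Function.uncurry u) := by
    apply Summable.of_norm
    have hb : ∀ p : ℤ × ℤ, ‖Function.uncurry u p‖ ≤
        (‖⟪e p.1, (G * X) (e p.2)⟫‖ ^ 2 + ‖⟪e p.1, (G * star Y) (e p.2)⟫‖ ^ 2) / 2 := by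
      rintro ⟨n, m⟩
      have e1 : ⟪g (e n), X (e m)⟫ = ⟪e n, (G * X) (e m)⟫ := by
        rw [ContinuousLinearMap.mul_apply, hGadj, ContinuousLinearMap.adjoint_inner_right]
      have e2 : ‖⟪(ContinuousLinearMap.adjoint Y) (e m), g (e n)⟫‖
          = ‖⟪e n, (G * star Y) (e m)⟫‖ := by
        have e3 : ⟪e n, (G * star Y) (e m)⟫
            = ⟪g (e n), (ContinuousLinearMap.adjoint Y) (e m)⟫ := by
          rw [ContinuousLinearMap.mul_apply, ContinuousLinearMap.star_eq_adjoint Y, hGadj,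
            ContinuousLinearMap.adjoint_inner_right]
        rw [e3, norm_inner_symm]
      show ‖u n m‖ ≤ _
      simp only [hu, norm_mul]
      rw [e1, e2]
      nlinarith [sq_nonneg (‖⟪e n, (G * X) (e m)⟫‖ - ‖⟪e n, (G * star Y) (e m)⟫‖),
        norm_nonneg (⟪e n, (G * X) (e m)⟫), norm_nonneg (⟪e n, (G * star Y) (e m)⟫)]
    exact Summable.of_nonneg_of_le (fun p => norm_nonneg _) hb
      ((hZ1.summable_entries'.add hZ2.summable_entries').div_const 2)
  have hcomm := Summable.tsum_comm' husum (fun n => (hrow n).summable) (fun m => (hcol m).summable)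
  calc traceOp e ((star g * X * g) * (star g * Y * g))
      = ∑' n : ℤ, ∑' m : ℤ, u n m := tsum_congr fun n => (hrow n).tsum_eq.symm
    _ = ∑' m : ℤ, ∑' n : ℤ, u n m := hcomm.symm
    _ = traceOp e (Y * X) := tsum_congr fun m => (hcol m).tsum_eq

lemma trace_cyclic {e : HilbertBasis ℤ ℂ H} {X Y : H →L[ℂ] H}
    (hX : IsHS e X) (hY : IsHS e Y) :
    traceOp e (X * Y) = traceOp e (Y * X) := by
  have h := trace_conj_mul (e := e) (g := (1 : H →L[ℂ] H)) (by simp) (by simp) hY hX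
  simpa using h.symm


-- ### triangular operators

lemma UpperTri.mul {e : HilbertBasis ℤ ℂ H} {X Y : H →L[ℂ] H}
    (hX : UpperTri e X) (hY : UpperTri e Y) : UpperTri e (X * Y) := by
  intro m n hmn
  have hexp : ⟪e m, (X * Y) (e n)⟫
      = ⟪(ContinuousLinearMap.adjoint X) (e m), Y (e n)⟫ := by
    rw [ContinuousLinearMap.mul_apply, ContinuousLinearMap.adjoint_inner_left]
  have h := hasSum_coeff_mul e ((ContinuousLinearMap.adjoint X) (e m)) (Y (e n))
  have hzero : ∀ k : ℤ, ⟪(ContinuousLinearMap.adjoint X) (e m), e k⟫ * ⟪e k, Y (e n)⟫ = 0 := by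
    intro k
    rcases lt_or_ge m k with hk | hk
    · rw [ContinuousLinearMap.adjoint_inner_left, hX m k hk, zero_mul]
    · rw [hY k n (lt_of_le_of_lt hk hmn), mul_zero]
  have h0 : HasSum (fun k : ℤ =>
      ⟪(ContinuousLinearMap.adjoint X) (e m), e k⟫ * ⟪e k, Y (e n)⟫) 0 := by
    have : (fun k : ℤ => ⟪(ContinuousLinearMap.adjoint X) (e m), e k⟫ * ⟪e k, Y (e n)⟫)
        = fun _ => (0 : ℂ) := funext hzero
    rw [this]
    exact hasSum_zero
  rw [hexp, ← h.unique h0]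

lemma diag_mul_tri {e : HilbertBasis ℤ ℂ H} {X Y : H →L[ℂ] H}
    (hX : UpperTri e X) (hY : UpperTri e Y) (n : ℤ) :
    ⟪e n, (X * Y) (e n)⟫ = ⟪e n, X (e n)⟫ * ⟪e n, Y (e n)⟫ := by
  have hexp : ⟪e n, (X * Y) (e n)⟫
      = ⟪(ContinuousLinearMap.adjoint X) (e n), Y (e n)⟫ := by
    rw [ContinuousLinearMap.mul_apply, ContinuousLinearMap.adjoint_inner_left]
  have h := hasSum_coeff_mul e ((ContinuousLinearMap.adjoint X) (e n)) (Y (e n))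
  have hzero : ∀ k : ℤ, k ≠ n →
      ⟪(ContinuousLinearMap.adjoint X) (e n), e k⟫ * ⟪e k, Y (e n)⟫ = 0 := by
    intro k hk
    rcases lt_trichotomy n k with hnk | hnk | hnk
    · rw [ContinuousLinearMap.adjoint_inner_left, hX n k hnk, zero_mul]
    · exact absurd hnk.symm hk
    · rw [hY k n hnk, mul_zero]
  have h1 := hasSum_single (f := fun k : ℤ =>
      ⟪(ContinuousLinearMap.adjoint X) (e n), e k⟫ * ⟪e k, Y (e n)⟫) n hzero
  rw [hexp, h.unique h1]
  show ⟪(ContinuousLinearMap.adjoint X) (e n), e n⟫ * ⟪e n, Y (e n)⟫ = _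
  rw [ContinuousLinearMap.adjoint_inner_left]

lemma RealDiag.mul_tri {e : HilbertBasis ℤ ℂ H} {X Y : H →L[ℂ] H}
    (hXt : UpperTri e X) (hYt : UpperTri e Y)
    (hXd : RealDiag e X) (hYd : RealDiag e Y) : RealDiag e (X * Y) := by
  intro n
  rw [diag_mul_tri hXt hYt n, Complex.mul_im, hXd n, hYd n]
  ring

lemma im_traceOp_realDiag {e : HilbertBasis ℤ ℂ H} {W : H →L[ℂ] H}
    (h : RealDiag e W) : (traceOp e W).im = 0 := by
  rw [← Complex.conj_eq_iff_im]
  unfold traceOp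
  rw [show ((starRingEnd ℂ) (∑' n : ℤ, ⟪e n, W (e n)⟫) : ℂ)
      = star (∑' n : ℤ, ⟪e n, W (e n)⟫) from rfl, tsum_star]
  refine tsum_congr fun n => ?_
  have := (Complex.conj_eq_iff_im (z := ⟪e n, W (e n)⟫)).mpr (h n)
  exact this

-- ### skew-hermitian triple

lemma im_trace_skew_triple {e : HilbertBasis ℤ ℂ H} {u₁ u₂ u₃ : H →L[ℂ] H}
    (h₁ : IsHS e u₁) (h₂ : IsHS e u₂) (h₃ : IsHS e u₃)
    (s₁ : SkewHerm u₁) (s₂ : SkewHerm u₂) (s₃ : SkewHerm u₃) :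
    (traceOp e (u₁ * (u₂ * u₃))).im = (traceOp e (u₁ * (u₃ * u₂))).im := by
  have hstar : star (u₁ * (u₂ * u₃)) = -((u₃ * u₂) * u₁) := by
    rw [star_mul, star_mul, s₁, s₂, s₃]
    simp [mul_assoc]
  have h1 : (starRingEnd ℂ) (traceOp e (u₁ * (u₂ * u₃)))
      = - traceOp e ((u₃ * u₂) * u₁) := by
    rw [← traceOp_star, hstar, traceOp_neg]
  have h2 : traceOp e ((u₃ * u₂) * u₁) = traceOp e (u₁ * (u₃ * u₂)) :=
    trace_cyclic (h₃.mul h₂) h₁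
  have := congrArg Complex.im h1
  simp only [Complex.conj_im, Complex.neg_im] at this
  rw [h2] at this
  linarith

-- ### trace class implies Hilbert-Schmidt

lemma IsTC.isHS {e : HilbertBasis ℤ ℂ H} {X : H →L[ℂ] H} (h : IsTC e X) : IsHS e X := by
  set T : H →L[ℂ] H := star X * X with hT
  have hT0 : 0 ≤ T := star_mul_self_nonneg X
  set S : H →L[ℂ] H := CFC.sqrt T with hS
  have hS0 : 0 ≤ S := CFC.sqrt_nonneg T
  have hSsa : IsSelfAdjoint S := IsSelfAdjoint.of_nonneg hS0
  have hS2 : S * S = T := by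
    have := CFC.sq_sqrt T hT0
    rwa [sq] at this
  set R : H →L[ℂ] H := CFC.sqrt S with hR
  have hR0 : 0 ≤ R := CFC.sqrt_nonneg S
  have hRsa : IsSelfAdjoint R := IsSelfAdjoint.of_nonneg hR0
  have hR2 : R * R = S := by
    have := CFC.sq_sqrt S hS0
    rwa [sq] at this
  have hadjS : ContinuousLinearMap.adjoint S = S := by
    rw [← ContinuousLinearMap.star_eq_adjoint]; exact hSsa
  have hadjR : ContinuousLinearMap.adjoint R = R := by
    rw [← ContinuousLinearMap.star_eq_adjoint]; exact hRsa
  have key : ∀ n : ℤ, ‖X (e n)‖ ^ 2 ≤ ‖R‖ ^ 2 * (⟪e n, absCLM X (e n)⟫).re := by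
    intro n
    have e0 : ‖X (e n)‖ ^ 2 = ‖S (e n)‖ ^ 2 := by
      have a1 : (⟪X (e n), X (e n)⟫).re = ‖X (e n)‖ ^ 2 := by
        simpa using inner_self_eq_norm_sq (𝕜 := ℂ) (X (e n))
      have a2 : (⟪S (e n), S (e n)⟫).re = ‖S (e n)‖ ^ 2 := by
        simpa using inner_self_eq_norm_sq (𝕜 := ℂ) (S (e n))
      have b1 : ⟪e n, T (e n)⟫ = ⟪X (e n), X (e n)⟫ := by
        rw [hT, ContinuousLinearMap.mul_apply, ContinuousLinearMap.star_eq_adjoint,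
          ContinuousLinearMap.adjoint_inner_right]
      have b2 : ⟪e n, T (e n)⟫ = ⟪S (e n), S (e n)⟫ := by
        conv_lhs => rw [← hS2, ContinuousLinearMap.mul_apply,
          ← ContinuousLinearMap.adjoint_inner_left S]
        rw [hadjS]
      have a3 : ⟪X (e n), X (e n)⟫ = ⟪S (e n), S (e n)⟫ := b1 ▸ b2
      rw [← a1, ← a2, a3]
    have e1 : ‖S (e n)‖ ≤ ‖R‖ * ‖R (e n)‖ := by
      calc ‖S (e n)‖ = ‖R (R (e n))‖ := by rw [← ContinuousLinearMap.mul_apply, hR2]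
        _ ≤ ‖R‖ * ‖R (e n)‖ := R.le_opNorm _
    have e2 : ‖R (e n)‖ ^ 2 = (⟪e n, absCLM X (e n)⟫).re := by
      have a2 : (⟪R (e n), R (e n)⟫).re = ‖R (e n)‖ ^ 2 := by
        simpa using inner_self_eq_norm_sq (𝕜 := ℂ) (R (e n))
      have a3 : ⟪R (e n), R (e n)⟫ = ⟪e n, S (e n)⟫ := by
        conv_rhs => rw [← hR2, ContinuousLinearMap.mul_apply,
          ← ContinuousLinearMap.adjoint_inner_left R]
        rw [hadjR]
      have a4 : absCLM X = S := rfl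
      rw [← a2, a3, a4]
    calc ‖X (e n)‖ ^ 2 = ‖S (e n)‖ ^ 2 := e0
      _ ≤ (‖R‖ * ‖R (e n)‖) ^ 2 := by
          apply pow_le_pow_left₀ (norm_nonneg _) e1
      _ = ‖R‖ ^ 2 * ‖R (e n)‖ ^ 2 := by ring
      _ = ‖R‖ ^ 2 * (⟪e n, absCLM X (e n)⟫).re := by rw [e2]
  exact Summable.of_nonneg_of_le (fun n => sq_nonneg _) key (h.mul_left (‖R‖ ^ 2))


-- ### expansion machinery

lemma summable_diag_add_s17 {e : HilbertBasis ℤ ℂ H} {P Q : H →L[ℂ] H}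
    (hP : Summable (fun n : ℤ => ⟪e n, P (e n)⟫))
    (hQ : Summable (fun n : ℤ => ⟪e n, Q (e n)⟫)) :
    Summable (fun n : ℤ => ⟪e n, (P + Q) (e n)⟫) :=
  (hP.add hQ).congr fun n => by simp [inner_add_right]

lemma trace_rot {e : HilbertBasis ℤ ℂ H} {X Y Z : H →L[ℂ] H}
    (hX : IsHS e X) (hY : IsHS e Y) (hZ : IsHS e Z) :
    traceOp e (X * (Y * Z)) = traceOp e (Y * (Z * X)) := by
  rw [trace_cyclic hX (hY.mul hZ), mul_assoc]

lemma im_trace_comm {e : HilbertBasis ℤ ℂ H} {X Y Z : H →L[ℂ] H}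
    (hX : IsHS e X) (hY : IsHS e Y) (hZ : IsHS e Z) :
    (traceOp e (X * (Y * Z - Z * Y))).im
      = (traceOp e (X * (Y * Z))).im - (traceOp e (X * (Z * Y))).im := by
  rw [mul_sub, traceOp_sub (summable_diag_mul hX (hY.mul hZ))
    (summable_diag_mul hX (hZ.mul hY)), Complex.sub_im]

lemma trace_expand8 {e : HilbertBasis ℤ ℂ H} {x1 x2 y1 y2 z1 z2 X Y Z : H →L[ℂ] H}
    (h1 : IsHS e x1) (h2 : IsHS e x2) (h3 : IsHS e y1) (h4 : IsHS e y2)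
    (h5 : IsHS e z1) (h6 : IsHS e z2)
    (hX : x1 + x2 = X) (hY : y1 + y2 = Y) (hZ : z1 + z2 = Z) :
    traceOp e (X * (Y * Z)) =
      traceOp e (x1 * (y1 * z1)) + (traceOp e (x1 * (y1 * z2)) +
      (traceOp e (x1 * (y2 * z1)) + (traceOp e (x1 * (y2 * z2)) +
      (traceOp e (x2 * (y1 * z1)) + (traceOp e (x2 * (y1 * z2)) +
      (traceOp e (x2 * (y2 * z1)) + traceOp e (x2 * (y2 * z2)))))))) := by
  subst hX hY hZ
  have hop : (x1 + x2) * ((y1 + y2) * (z1 + z2)) =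
      x1 * (y1 * z1) + (x1 * (y1 * z2) + (x1 * (y2 * z1) + (x1 * (y2 * z2) +
      (x2 * (y1 * z1) + (x2 * (y1 * z2) + (x2 * (y2 * z1) + x2 * (y2 * z2))))))) := by
    noncomm_ring
  rw [hop]
  have s1 := summable_diag_mul h1 (h3.mul h5)
  have s2 := summable_diag_mul h1 (h3.mul h6)
  have s3 := summable_diag_mul h1 (h4.mul h5)
  have s4 := summable_diag_mul h1 (h4.mul h6)
  have s5 := summable_diag_mul h2 (h3.mul h5)
  have s6 := summable_diag_mul h2 (h3.mul h6)
  have s7 := summable_diag_mul h2 (h4.mul h5)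
  have s8 := summable_diag_mul h2 (h4.mul h6)
  have t78 := summable_diag_add_s17 s7 s8
  have t678 := summable_diag_add_s17 s6 t78
  have t5678 := summable_diag_add_s17 s5 t678
  have t45678 := summable_diag_add_s17 s4 t5678
  have t345678 := summable_diag_add_s17 s3 t45678
  have t2345678 := summable_diag_add_s17 s2 t345678
  rw [traceOp_add s1 t2345678, traceOp_add s2 t345678, traceOp_add s3 t45678,
    traceOp_add s4 t5678, traceOp_add s5 t678, traceOp_add s6 t78, traceOp_add s7 s8]



/-- with `A = g⁻¹ p_{b₂⁺}(x₁) g`, `B = g⁻¹ p_{b₂⁺}(x₂) g`,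
`C = g⁻¹ p_{b₂⁺}(x₃) g`, the six-term cyclic sum
`Im Tr(p_{u₂}(C)[p_{b₂⁺}(A), p_{b₂⁺}(B)]) + Im Tr(p_{u₂}(C)[p_{b₂⁺}(A), p_{u₂}(B)]) + ⋯`
vanishes. -/
theorem statement_17 {H : Type*} [NormedAddCommGroup H] [InnerProductSpace ℂ H]
    [CompleteSpace H] (e : HilbertBasis ℤ ℂ H)
    (pu pb : (H →L[ℂ] H) → (H →L[ℂ] H))
    (hdec : ∀ x : H →L[ℂ] H, IsHS e x →
      InU2 e (pu x) ∧ InB2 e (pb x) ∧ pu x + pb x = x)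
    (g : H →L[ℂ] H) (hg : g ∈ unitary (H →L[ℂ] H))
    (x₁ x₂ x₃ : H →L[ℂ] H) (hx₁ : IsTC e x₁) (hx₂ : IsTC e x₂) (hx₃ : IsTC e x₃)
    (A B C : H →L[ℂ] H)
    (hA : A = star g * pb x₁ * g) (hB : B = star g * pb x₂ * g)
    (hC : C = star g * pb x₃ * g) :
    (traceOp e (pu C * (pb A * pb B - pb B * pb A))).im +
    (traceOp e (pu C * (pb A * pu B - pu B * pb A))).im +
    (traceOp e (pu A * (pb B * pb C - pb C * pb B))).im +
    (traceOp e (pu A * (pb B * pu C - pu C * pb B))).im +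
    (traceOp e (pu B * (pb C * pb A - pb A * pb C))).im +
    (traceOp e (pu B * (pb C * pu A - pu A * pb C))).im = 0 := by
  -- main proof
  obtain ⟨hgl, hgr⟩ := Unitary.mem_iff.mp hg
  obtain ⟨-, ⟨hα, hαt, hαd⟩, -⟩ := hdec x₁ hx₁.isHS
  obtain ⟨-, ⟨hβ, hβt, hβd⟩, -⟩ := hdec x₂ hx₂.isHS
  obtain ⟨-, ⟨hγ, hγt, hγd⟩, -⟩ := hdec x₃ hx₃.isHS
  have hAHS : IsHS e A := by rw [hA]; exact isHS_mul_const (hα.const_mul (star g)) g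
  have hBHS : IsHS e B := by rw [hB]; exact isHS_mul_const (hβ.const_mul (star g)) g
  have hCHS : IsHS e C := by rw [hC]; exact isHS_mul_const (hγ.const_mul (star g)) g
  obtain ⟨⟨huA, huAs⟩, ⟨hbA, hbAt, hbAd⟩, hsA⟩ := hdec A hAHS
  obtain ⟨⟨huB, huBs⟩, ⟨hbB, hbBt, hbBd⟩, hsB⟩ := hdec B hBHS
  obtain ⟨⟨huC, huCs⟩, ⟨hbC, hbCt, hbCd⟩, hsC⟩ := hdec C hCHS
  -- the conjugated products
  have hBC : B * C = star g * (pb x₂ * pb x₃) * g := by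
    rw [hB, hC]
    calc (star g * pb x₂ * g) * (star g * pb x₃ * g)
        = star g * pb x₂ * ((g * star g) * (pb x₃ * g)) := by simp only [mul_assoc]
      _ = star g * (pb x₂ * pb x₃) * g := by rw [hgr]; simp only [one_mul, mul_assoc]
  have hCB : C * B = star g * (pb x₃ * pb x₂) * g := by
    rw [hB, hC]
    calc (star g * pb x₃ * g) * (star g * pb x₂ * g)
        = star g * pb x₃ * ((g * star g) * (pb x₂ * g)) := by simp only [mul_assoc]
      _ = star g * (pb x₃ * pb x₂) * g := by rw [hgr]; simp only [one_mul, mul_assoc]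
  -- vanishing of Im Tr(A(BC)) and Im Tr(A(CB))
  have hzABC : (traceOp e (A * (B * C))).im = 0 := by
    rw [hBC, hA, trace_conj_mul hgl hgr hα (hβ.mul hγ)]
    exact im_traceOp_realDiag
      (RealDiag.mul_tri (hβt.mul hγt) hαt (RealDiag.mul_tri hβt hγt hβd hγd) hαd)
  have hzACB : (traceOp e (A * (C * B))).im = 0 := by
    rw [hCB, hA, trace_conj_mul hgl hgr hα (hγ.mul hβ)]
    exact im_traceOp_realDiag
      (RealDiag.mul_tri (hγt.mul hβt) hαt (RealDiag.mul_tri hγt hβt hγd hβd) hαd)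
  -- skew triple
  have hskew : (traceOp e (pu A * (pu B * pu C))).im
      = (traceOp e (pu A * (pu C * pu B))).im :=
    im_trace_skew_triple huA huB huC huAs huBs huCs
  -- triangular triples
  have hb1 : (traceOp e (pb A * (pb B * pb C))).im = 0 :=
    im_traceOp_realDiag
      (RealDiag.mul_tri hbAt (hbBt.mul hbCt) hbAd (RealDiag.mul_tri hbBt hbCt hbBd hbCd))
  have hb2 : (traceOp e (pb A * (pb C * pb B))).im = 0 :=
    im_traceOp_realDiag
      (RealDiag.mul_tri hbAt (hbCt.mul hbBt) hbAd (RealDiag.mul_tri hbCt hbBt hbCd hbBd))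
  -- expansions
  have h1 := congrArg Complex.im (trace_expand8 huA hbA huB hbB huC hbC hsA hsB hsC)
  have h2 := congrArg Complex.im (trace_expand8 huA hbA huC hbC huB hbB hsA hsC hsB)
  simp only [Complex.add_im] at h1 h2
  -- cyclic rotations of the goal terms
  have r1 : traceOp e (pu C * (pb A * pb B)) = traceOp e (pb A * (pb B * pu C)) :=
    trace_rot huC hbA hbB
  have r2 : traceOp e (pu C * (pb B * pb A)) = traceOp e (pb A * (pu C * pb B)) := by
    rw [trace_rot huC hbB hbA, trace_rot hbB hbA huC]
  have r3 : traceOp e (pu C * (pb A * pu B)) = traceOp e (pb A * (pu B * pu C)) :=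
    trace_rot huC hbA huB
  have r4 : traceOp e (pu C * (pu B * pb A)) = traceOp e (pb A * (pu C * pu B)) := by
    rw [trace_rot huC huB hbA, trace_rot huB hbA huC]
  have r9 : traceOp e (pu B * (pb C * pb A)) = traceOp e (pb A * (pu B * pb C)) := by
    rw [trace_rot huB hbC hbA, trace_rot hbC hbA huB]
  have r10 : traceOp e (pu B * (pb A * pb C)) = traceOp e (pb A * (pb C * pu B)) :=
    trace_rot huB hbA hbC
  have r11 : traceOp e (pu B * (pb C * pu A)) = traceOp e (pu A * (pu B * pb C)) := by
    rw [trace_rot huB hbC huA, trace_rot hbC huA huB]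
  have r12 : traceOp e (pu B * (pu A * pb C)) = traceOp e (pu A * (pb C * pu B)) :=
    trace_rot huB huA hbC
  rw [im_trace_comm huC hbA hbB, im_trace_comm huC hbA huB, im_trace_comm huA hbB huC,
    im_trace_comm huA hbB hbC, im_trace_comm huB hbC hbA, im_trace_comm huB hbC huA,
    r1, r2, r3, r4, r9, r10, r11, r12]
  linarith [h1, h2, hzABC, hzACB, hskew, hb1, hb2]

end PL
end
end
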